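/- Let ψ be a unit vector in C^d and define G(i,k) = Σ_{r=0}^{d−1} conj(ψ_{r+i})·conj(ψ_{r+k})·ψ_r·ψ_{r+i+k} (indices mod d). Then |⟨ψ|X^iZ^j|ψ⟩|² = (d·δ_{i,0}δ_{j,0} + 1)/(d+1) for all i,j if and only if G(i,k) = (δ_{i,0} + δ_{k,0})/(d+1) for all i,k. -/

import Mathlib

open Matrix Finset ComplexConjugate

noncomputable section

/-- ω = exp(2πi/d) -/
def omg (d : ℕ) : ℂ := Complex.exp (2 * Real.pi * Complex.I / d)

/-- τ = -exp(πi/d) -/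
def tau (d : ℕ) : ℂ := -Complex.exp (Real.pi * Complex.I / d)

/-- The clock matrix `Z`, with `Z|r⟩ = ω^r |r⟩`. -/
def Zmat (d : ℕ) [NeZero d] : Matrix (ZMod d) (ZMod d) ℂ :=
  Matrix.diagonal fun r => omg d ^ r.val

/-- The shift matrix `X`, with `X|r⟩ = |r+1⟩` (indices mod d). -/
def Xmat (d : ℕ) [NeZero d] : Matrix (ZMod d) (ZMod d) ℂ :=
  Matrix.of fun r s => if r = s + 1 then 1 else 0

/-- The displacement operators `D_{j,k} = τ^{jk} X^j Z^k`. -/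
def Dmat (d : ℕ) [NeZero d] (j k : ZMod d) : Matrix (ZMod d) (ZMod d) ℂ :=
  tau d ^ (j.val * k.val) • (Xmat d ^ j.val * Zmat d ^ k.val)

/-- Standard Hermitian inner product, conjugate-linear in the first argument. -/
def ip {d : ℕ} [NeZero d] (u w : ZMod d → ℂ) : ℂ := ∑ k, conj (u k) * w k

namespace SicAux

set_option linter.unusedSectionVars false

variable (d : ℕ) [NeZero d]

lemma omg_pow_d : omg d ^ d = 1 := (Complex.isPrimitiveRoot_exp d (NeZero.ne d)).pow_eq_one

lemma omg_pow_mod (m : ℕ) : omg d ^ m = omg d ^ (m % d) := by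
  conv_lhs => rw [← Nat.mod_add_div m d]
  rw [pow_add, pow_mul, omg_pow_d, one_pow, mul_one]

lemma omg_pow_congr {m n : ℕ} (h : (m : ZMod d) = (n : ZMod d)) : omg d ^ m = omg d ^ n := by
  rw [omg_pow_mod d m, omg_pow_mod d n]
  rw [ZMod.natCast_eq_natCast_iff] at h
  exact congrArg _ h

lemma omg_abs : ‖omg d‖ = 1 := by
  have h : (2 * (Real.pi:ℂ) * Complex.I / d) = ((2 * Real.pi / d : ℝ) : ℂ) * Complex.I := by
    push_cast; ring
  rw [omg, h, Complex.norm_exp_ofReal_mul_I]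

lemma conj_omg : conj (omg d) = omg d ^ (d - 1) := by
  have h1 : omg d * conj (omg d) = 1 := by
    rw [Complex.mul_conj, Complex.normSq_eq_norm_sq, omg_abs]; norm_num
  have h2 : omg d * omg d ^ (d-1) = 1 := by
    rw [← pow_succ', Nat.sub_add_cancel (Nat.one_le_iff_ne_zero.mpr (NeZero.ne d)), omg_pow_d]
  calc conj (omg d) = conj (omg d) * (omg d * omg d ^ (d-1)) := by rw [h2, mul_one]
    _ = (omg d * conj (omg d)) * omg d ^ (d-1) := by ring
    _ = omg d ^ (d-1) := by rw [h1, one_mul]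

lemma conj_omg_pow (m : ℕ) : conj (omg d ^ m) = omg d ^ ((d-1) * m) := by
  rw [map_pow, conj_omg, ← pow_mul]

lemma vc (a : ZMod d) : ((a.val : ℕ) : ZMod d) = a := ZMod.natCast_rightInverse a

lemma omg_mul_conj (a b : ZMod d) (m : ℕ) :
    omg d ^ (a.val * m) * conj (omg d ^ (b.val * m)) = omg d ^ ((a-b).val * m) := by
  rw [conj_omg_pow, ← pow_add]
  apply omg_pow_congr
  push_cast [Nat.cast_sub (Nat.one_le_iff_ne_zero.mpr (NeZero.ne d))]
  rw [vc, vc, vc]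
  simp [ZMod.natCast_self]
  ring

lemma omg_pow_addl (a b : ZMod d) (m : ℕ) :
    omg d ^ (a.val * m) * omg d ^ (b.val * m) = omg d ^ ((a+b).val * m) := by
  rw [← pow_add]
  apply omg_pow_congr
  push_cast
  rw [vc, vc, vc]
  ring

lemma sum_omg (t : ZMod d) :
    ∑ j : ZMod d, omg d ^ (t.val * j.val) = if t = 0 then (d:ℂ) else 0 := by
  have key : ∑ j : ZMod d, omg d ^ (t.val * j.val)
      = ∑ n ∈ Finset.range d, (omg d ^ t.val) ^ n := by
    simp_rw [pow_mul]
    obtain ⟨n, rfl⟩ : ∃ n, d = n + 1 := ⟨d - 1, (Nat.succ_pred_eq_of_pos (NeZero.pos d)).symm⟩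
    exact Fin.sum_univ_eq_sum_range _ _
  rcases eq_or_ne t 0 with rfl | ht
  · simp [key]
  · rw [key, if_neg ht]
    have hx1 : omg d ^ t.val ≠ 1 :=
      (Complex.isPrimitiveRoot_exp d (NeZero.ne d)).pow_ne_one_of_pos_of_lt
        (ZMod.val_pos.mpr ht).ne' (ZMod.val_lt t)
    have hxd : (omg d ^ t.val) ^ d = 1 := by
      rw [← pow_mul, mul_comm, pow_mul, omg_pow_d, one_pow]
    rw [geom_sum_eq hx1, hxd, sub_self, zero_div]

lemma Xpow (n : ℕ) :
    (Xmat d) ^ n = Matrix.of fun r s => if r = s + (n : ZMod d) then (1:ℂ) else 0 := by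
  induction n with
  | zero => ext r s; simp [Matrix.one_apply]
  | succ n ih =>
      rw [pow_succ, ih]
      ext r s
      rw [Matrix.mul_apply, Finset.sum_eq_single (s + 1)]
      · have h : (s + 1) + (n : ZMod d) = s + ((n:ℕ)+1 : ℕ) := by push_cast; ring
        simp only [Matrix.of_apply, Xmat, if_pos rfl, mul_one, h]
        simp
      · intro b _ hb
        simp [Xmat, Matrix.of_apply, hb]
      · simp

lemma XZvec (ψ : ZMod d → ℂ) (i j : ZMod d) (r : ZMod d) :
    ((Xmat d ^ i.val * Zmat d ^ j.val) *ᵥ ψ) r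
      = omg d ^ ((r - i).val * j.val) * ψ (r - i) := by
  rw [← Matrix.mulVec_mulVec]
  have hz : ((Zmat d ^ j.val) *ᵥ ψ) = fun s => omg d ^ (s.val * j.val) * ψ s := by
    funext s
    rw [Zmat, Matrix.diagonal_pow, Matrix.mulVec_diagonal]
    rw [Pi.pow_apply, ← pow_mul]
  rw [hz, Xpow]
  simp only [Matrix.mulVec, dotProduct, Matrix.of_apply]
  rw [Finset.sum_eq_single (r - i)]
  · rw [if_pos (by rw [vc]; ring), one_mul]
  · intro b _ hb
    rw [if_neg, zero_mul]
    rw [vc]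
    intro hc
    exact hb (by rw [hc]; ring)
  · simp

lemma star_eq (ψ : ZMod d → ℂ) (i j : ZMod d) :
    (∑ r : ZMod d, conj (ψ r) * (omg d ^ ((r-i).val * j.val) * ψ (r-i))) *
      conj (∑ s : ZMod d, conj (ψ s) * (omg d ^ ((s-i).val * j.val) * ψ (s-i)))
    = ∑ t : ZMod d,
        conj (∑ u : ZMod d, conj (ψ (u+i)) * conj (ψ (u+t)) * ψ u * ψ (u+i+t)) *
          omg d ^ (t.val * j.val) := by
  set a : ZMod d → ℂ := fun r => conj (ψ r) * (omg d ^ ((r-i).val * j.val) * ψ (r-i)) with ha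
  set b : ZMod d → ℂ := fun s => ψ s * (conj (omg d ^ ((s-i).val * j.val)) * conj (ψ (s-i))) with hb
  have hcs : conj (∑ s : ZMod d, a s) = ∑ s : ZMod d, b s := by
    rw [map_sum]
    refine Finset.sum_congr rfl fun s _ => ?_
    simp [ha, hb, mul_comm, mul_left_comm]
  calc (∑ r : ZMod d, a r) * conj (∑ s : ZMod d, a s)
      = ∑ r : ZMod d, ∑ s : ZMod d, a r * b s := by rw [hcs, Finset.sum_mul_sum]
    _ = ∑ r : ZMod d, ∑ t : ZMod d, a r * b (r - t) :=
        Finset.sum_congr rfl fun r _ =>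
          (Fintype.sum_equiv (Equiv.subLeft r) (fun t => a r * b (r - t)) (fun s => a r * b s)
            (fun t => rfl)).symm
    _ = ∑ t : ZMod d, ∑ r : ZMod d, a r * b (r - t) := Finset.sum_comm
    _ = _ := by
        refine Finset.sum_congr rfl fun t _ => ?_
        have hph : ∀ r : ZMod d, a r * b (r - t)
            = (conj (ψ r) * ψ (r-i) * ψ (r-t) * conj (ψ (r - t - i))) * omg d ^ (t.val * j.val) := by
          intro r
          have h1 := omg_mul_conj d (r - i) (r - t - i) j.val
          have h2 : (r - i) - (r - t - i) = t := by ring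
          rw [h2] at h1
          simp only [ha, hb]
          linear_combination (conj (ψ r) * ψ (r-i) * ψ (r-t) * conj (ψ (r - t - i))) * h1
        simp_rw [hph]
        rw [← Finset.sum_mul]
        congr 1
        rw [map_sum]
        refine (Fintype.sum_equiv (Equiv.subRight (t+i))
          (fun r => conj (ψ r) * ψ (r-i) * ψ (r-t) * conj (ψ (r - t - i)))
          (fun u => conj (conj (ψ (u+i)) * conj (ψ (u+t)) * ψ u * ψ (u+i+t))) ?_).symm.symm
        intro r
        simp only [Equiv.subRight_apply, _root_.map_mul, Complex.conj_conj]
        have e4 : r - (t+i) = r - t - i := by ring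
        rw [e4]
        have e3 : r - t - i + i + t = r := by ring
        rw [e3]
        have e1 : r - t - i + i = r - t := by ring
        rw [e1]
        have e2 : r - t - i + t = r - i := by ring
        rw [e2]
        ring

end SicAux

open SicAux

theorem sic_iff_G (d : ℕ) [NeZero d] (ψ : ZMod d → ℂ) (hψ : ip ψ ψ = 1) :
    (∀ i j : ZMod d,
        ‖ip ψ ((Xmat d ^ i.val * Zmat d ^ j.val) *ᵥ ψ)‖ ^ 2 =
          ((d : ℝ) * (if i = 0 then 1 else 0) * (if j = 0 then 1 else 0) + 1) / (d + 1)) ↔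
    (∀ i k : ZMod d,
        (∑ r : ZMod d, conj (ψ (r + i)) * conj (ψ (r + k)) * ψ r * ψ (r + i + k)) =
          ((if i = 0 then 1 else 0) + (if k = 0 then 1 else 0)) / ((d : ℂ) + 1)) := by
  set G : ZMod d → ZMod d → ℂ :=
    fun i k => ∑ r : ZMod d, conj (ψ (r + i)) * conj (ψ (r + k)) * ψ r * ψ (r + i + k) with hG
  set F : ZMod d → ZMod d → ℂ :=
    fun i j => ip ψ ((Xmat d ^ i.val * Zmat d ^ j.val) *ᵥ ψ) with hFdef
  have hGa : ∀ a b : ZMod d, G a b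
      = ∑ r : ZMod d, conj (ψ (r + a)) * conj (ψ (r + b)) * ψ r * ψ (r + a + b) :=
    fun _ _ => rfl
  have hd1 : ((d:ℂ) + 1) ≠ 0 := by
    have : ((d+1:ℕ):ℂ) ≠ 0 := Nat.cast_ne_zero.mpr (Nat.succ_ne_zero d)
    push_cast at this; exact this
  have hdc : (d:ℂ) ≠ 0 := Nat.cast_ne_zero.mpr (NeZero.ne d)
  have hstar : ∀ i j : ZMod d,
      F i j * conj (F i j) = ∑ t : ZMod d, conj (G i t) * omg d ^ (t.val * j.val) := by
    intro i j
    have hF : F i j = ∑ r : ZMod d, conj (ψ r) * (omg d ^ ((r-i).val * j.val) * ψ (r-i)) := by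
      rw [hFdef]
      exact Finset.sum_congr rfl fun r _ => by rw [XZvec]
    rw [hF]
    exact star_eq d ψ i j
  have key : ∀ (z : ℂ) (c : ℝ), ‖z‖ ^ 2 = c ↔ z * conj z = (c : ℂ) := by
    intro z c
    rw [Complex.sq_norm, ← Complex.ofReal_inj, ← Complex.mul_conj]
  have hcast : ∀ i j : ZMod d,
      ((((d : ℝ) * (if i = 0 then 1 else 0) * (if j = 0 then 1 else 0) + 1) / (d + 1) : ℝ) : ℂ)
        = ((d:ℂ) * (if i = 0 then 1 else 0) * (if j = 0 then 1 else 0) + 1) / ((d:ℂ)+1) := by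
    intro i j
    push_cast [apply_ite (Complex.ofReal)]
    norm_num
  constructor
  · intro h i k
    have hC : ∀ j : ZMod d, ∑ t : ZMod d, conj (G i t) * omg d ^ (t.val * j.val)
        = ((d:ℂ) * (if i = 0 then 1 else 0) * (if j = 0 then 1 else 0) + 1) / ((d:ℂ)+1) := by
      intro j
      rw [← hstar i j, ← hcast i j]
      exact (key _ _).mp (h i j)
    have hL : ∑ j : ZMod d,
        (∑ t : ZMod d, conj (G i t) * omg d ^ (t.val * j.val)) * omg d ^ ((-k).val * j.val)
        = (d:ℂ) * conj (G i k) := by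
      calc ∑ j : ZMod d, (∑ t : ZMod d, conj (G i t) * omg d ^ (t.val * j.val)) * omg d ^ ((-k).val * j.val)
          = ∑ j : ZMod d, ∑ t : ZMod d,
              conj (G i t) * (omg d ^ (t.val * j.val) * omg d ^ ((-k).val * j.val)) := by
            simp_rw [Finset.sum_mul, mul_assoc]
        _ = ∑ j : ZMod d, ∑ t : ZMod d, conj (G i t) * omg d ^ ((t - k).val * j.val) := by
            refine Finset.sum_congr rfl fun j _ => Finset.sum_congr rfl fun t _ => ?_
            rw [omg_pow_addl d t (-k) j.val, show t + -k = t - k from (sub_eq_add_neg t k).symm]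
        _ = ∑ t : ZMod d, conj (G i t) * ∑ j : ZMod d, omg d ^ ((t - k).val * j.val) := by
            rw [Finset.sum_comm]; simp_rw [Finset.mul_sum]
        _ = ∑ t : ZMod d, conj (G i t) * (if t - k = 0 then (d:ℂ) else 0) := by
            simp_rw [sum_omg]
        _ = (d:ℂ) * conj (G i k) := by
            simp only [sub_eq_zero, mul_ite, mul_zero]
            rw [Finset.sum_ite_eq' Finset.univ k (fun t => conj (G i t) * (d:ℂ))]
            simp [mul_comm]
    have hR : ∑ j : ZMod d,
        (((d:ℂ) * (if i = 0 then 1 else 0) * (if j = 0 then 1 else 0) + 1) / ((d:ℂ)+1))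
          * omg d ^ ((-k).val * j.val)
        = (d:ℂ) * (if i = 0 then 1 else 0) / ((d:ℂ)+1)
          + (d:ℂ) * (if k = 0 then 1 else 0) / ((d:ℂ)+1) := by
      have hper : ∀ j : ZMod d,
          (((d:ℂ) * (if i = 0 then 1 else 0) * (if j = 0 then 1 else 0) + 1) / ((d:ℂ)+1))
            * omg d ^ ((-k).val * j.val)
          = (d:ℂ) * (if i = 0 then 1 else 0) / ((d:ℂ)+1) * (if j = 0 then 1 else 0)
            + (1/((d:ℂ)+1)) * omg d ^ ((-k).val * j.val) := by
        intro j
        rcases eq_or_ne j 0 with rfl | hj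
        · simp only [eq_self_iff_true, if_true, ZMod.val_zero, mul_zero, pow_zero]; ring
        · simp only [if_neg hj]; ring
      rw [Finset.sum_congr rfl fun j _ => hper j]
      rw [Finset.sum_add_distrib, ← Finset.mul_sum, ← Finset.mul_sum]
      rw [Finset.sum_ite_eq' Finset.univ (0 : ZMod d) (fun _ => (1:ℂ))]
      rw [sum_omg d (-k)]
      simp only [Finset.mem_univ, if_true, mul_one, neg_eq_zero]
      split_ifs <;> ring
    have hmul : (d:ℂ) * conj (G i k)
        = (d:ℂ) * (if i = 0 then 1 else 0) / ((d:ℂ)+1)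
          + (d:ℂ) * (if k = 0 then 1 else 0) / ((d:ℂ)+1) := by
      rw [← hL, ← hR]
      exact Finset.sum_congr rfl fun j _ => by rw [hC j]
    have hcg : conj (G i k)
        = ((if i = 0 then 1 else 0) + (if k = 0 then 1 else 0)) / ((d:ℂ)+1) := by
      apply mul_left_cancel₀ hdc
      rw [hmul]; ring
    have := congrArg conj hcg
    rw [Complex.conj_conj] at this
    rw [← hGa i k, this]
    simp [map_div₀, apply_ite (starRingEnd ℂ)]
  · intro h i j
    rw [key (F i j) _, hcast i j, hstar i j]
    have hconjG : ∀ t : ZMod d, conj (G i t)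
        = ((if i = 0 then 1 else 0) + (if t = 0 then 1 else 0)) / ((d:ℂ)+1) := by
      intro t
      rw [hGa i t, h i t]
      simp [map_div₀, apply_ite (starRingEnd ℂ)]
    have hper : ∀ t : ZMod d, conj (G i t) * omg d ^ (t.val * j.val)
        = ((if i = 0 then 1 else 0)/((d:ℂ)+1)) * omg d ^ (t.val * j.val)
          + (1/((d:ℂ)+1)) * (if t = 0 then 1 else 0) := by
      intro t
      rw [hconjG t]
      rcases eq_or_ne t 0 with rfl | ht
      · simp only [eq_self_iff_true, if_true, ZMod.val_zero, zero_mul, pow_zero]; ring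
      · simp only [if_neg ht]; ring
    rw [Finset.sum_congr rfl fun t _ => hper t]
    rw [Finset.sum_add_distrib, ← Finset.mul_sum, ← Finset.mul_sum]
    rw [show (∑ t : ZMod d, omg d ^ (t.val * j.val)) = ∑ t : ZMod d, omg d ^ (j.val * t.val)
        from Finset.sum_congr rfl fun t _ => by rw [mul_comm], sum_omg d j]
    rw [Finset.sum_ite_eq' Finset.univ (0 : ZMod d) (fun _ => (1:ℂ))]
    simp only [Finset.mem_univ, if_true, mul_one]
    split_ifs <;> ring
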